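/- Let F be a finite field and V a finite-dimensional F-vector space of dimension v + 1 with v ≥ 1, and let g be an F-linear automorphism of V. Then the number of one-dimensional subspaces W ≤ V with g(W) = W equals the number of v-dimensional (codimension-one) subspaces H ≤ V with g(H) = H. -/

import Mathlib

open Module

section DavenportAux

variable {F : Type*} [Field F] {V : Type*} [AddCommGroup V] [Module F V]
variable {V' : Type*} [AddCommGroup V'] [Module F V']

/-- Lines of `V` contained in `E` correspond to lines of `E`. -/
noncomputable def davenportLinesLEEquiv (E : Submodule F V) :
    {W : Submodule F V // Module.finrank F W = 1 ∧ W ≤ E} ≃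
      {W : Submodule F E // Module.finrank F W = 1} := by
  refine ((Equiv.subtypeEquiv (Submodule.MapSubtype.orderIso E).toEquiv
      (q := fun p => Module.finrank F p.1 = 1) (fun W => ?_)).trans
      ((Equiv.subtypeSubtypeEquivSubtypeInter (fun W : Submodule F V => W ≤ E)
        (fun W => Module.finrank F W = 1)).trans
      (Equiv.subtypeEquivRight fun W => and_comm))).symm
  show Module.finrank F W = 1 ↔ Module.finrank F (W.map E.subtype) = 1
  rw [show Module.finrank F (W.map E.subtype) = Module.finrank F W from
    ((Submodule.equivMapOfInjective E.subtype E.injective_subtype W).finrank_eq).symm]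

/-- Subspaces of equal finrank have equinumerous sets of lines below them. -/
theorem davenport_lines_equiv_of_finrank_eq [FiniteDimensional F V] [FiniteDimensional F V']
    (E : Submodule F V) (E' : Submodule F V')
    (h : Module.finrank F E = Module.finrank F E') :
    Nonempty ({W : Submodule F V // Module.finrank F W = 1 ∧ W ≤ E} ≃
      {W : Submodule F V' // Module.finrank F W = 1 ∧ W ≤ E'}) := by
  obtain ⟨e⟩ := FiniteDimensional.nonempty_linearEquiv_of_finrank_eq h
  refine ⟨(davenportLinesLEEquiv E).trans (Equiv.trans (Equiv.subtypeEquiv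
    (Submodule.orderIsoMapComap e).toEquiv (fun W => ?_)) (davenportLinesLEEquiv E').symm)⟩
  show Module.finrank F W = 1 ↔ Module.finrank F (W.map (e : E →ₗ[F] E')) = 1
  rw [LinearEquiv.finrank_map_eq e W]

/-- A line lies in at most one eigenspace. -/
theorem davenport_eig_unique (f : Module.End F V) {W : Submodule F V}
    (hW : Module.finrank F W = 1)
    {c c' : F} (h : W ≤ f.eigenspace c) (h' : W ≤ f.eigenspace c') : c = c' := by
  have hbot : W ≠ ⊥ := by
    intro hb; rw [hb] at hW; simp [finrank_bot] at hW
  obtain ⟨x, hx, hx0⟩ := Submodule.exists_mem_ne_zero_of_ne_bot hbot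
  have h1 := Module.End.mem_eigenspace_iff.mp (h hx)
  have h2 := Module.End.mem_eigenspace_iff.mp (h' hx)
  have : (c - c') • x = 0 := by rw [sub_smul, h1.symm.trans h2]; abel
  rcases smul_eq_zero.mp this with hc | hx'
  · exact sub_eq_zero.mp hc
  · exact absurd hx' hx0

theorem davenport_map_eq_of_map_le [FiniteDimensional F V] (e : V ≃ₗ[F] V) {A : Submodule F V}
    (h : A.map (e : V →ₗ[F] V) ≤ A) : A.map (e : V →ₗ[F] V) = A :=
  Submodule.eq_of_le_of_finrank_eq h (LinearEquiv.finrank_map_eq e A)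

/-- A line is invariant under an automorphism iff it lies in some eigenspace. -/
theorem davenport_line_invariant_iff [FiniteDimensional F V] (f : V ≃ₗ[F] V) {W : Submodule F V}
    (hW : Module.finrank F W = 1) :
    W.map (f : V →ₗ[F] V) = W ↔
      ∃ c : F, W ≤ Module.End.eigenspace (f : V →ₗ[F] V) c := by
  constructor
  · intro hmap
    have hbot : W ≠ ⊥ := by intro hb; rw [hb] at hW; simp [finrank_bot] at hW
    obtain ⟨x, hx, hx0⟩ := Submodule.exists_mem_ne_zero_of_ne_bot hbot
    have hspan : W = Submodule.span F {x} := by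
      refine (Submodule.eq_of_le_of_finrank_eq ?_ ?_).symm
      · rwa [Submodule.span_singleton_le_iff_mem]
      · rw [finrank_span_singleton hx0, hW]
    have hfx : f x ∈ W := by rw [← hmap]; exact Submodule.mem_map_of_mem hx
    rw [hspan] at hfx
    obtain ⟨c, hc⟩ := Submodule.mem_span_singleton.mp hfx
    refine ⟨c, fun w hw => ?_⟩
    rw [hspan] at hw
    obtain ⟨a, rfl⟩ := Submodule.mem_span_singleton.mp hw
    rw [Module.End.mem_eigenspace_iff]
    show f (a • x) = c • a • x
    rw [map_smul, ← hc, smul_comm]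
  · rintro ⟨c, hc⟩
    refine davenport_map_eq_of_map_le f ?_
    rintro _ ⟨w, hw, rfl⟩
    have := Module.End.mem_eigenspace_iff.mp (hc hw)
    show (f : V →ₗ[F] V) w ∈ W
    rw [this]
    exact W.smul_mem c hw

/-- Invariant lines are classified by eigenvalue. -/
noncomputable def davenportInvariantLinesEquivSigma [FiniteDimensional F V] (f : V ≃ₗ[F] V) :
    {W : Submodule F V // Module.finrank F W = 1 ∧ W.map (f : V →ₗ[F] V) = W} ≃
      Σ c : F, {W : Submodule F V // Module.finrank F W = 1 ∧
        W ≤ Module.End.eigenspace (f : V →ₗ[F] V) c} := by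
  refine (Equiv.ofBijective
    (fun p => ⟨p.2.1, p.2.2.1, (davenport_line_invariant_iff f p.2.2.1).mpr ⟨p.1, p.2.2.2⟩⟩)
    ⟨?_, ?_⟩).symm
  · rintro ⟨c, W, h1, h2⟩ ⟨c', W', h1', h2'⟩ hEq
    have hWW : W = W' := congrArg Subtype.val hEq
    subst hWW
    have : c = c' := davenport_eig_unique _ h1 h2 h2'
    subst this
    rfl
  · rintro ⟨W, h1, h2⟩
    obtain ⟨c, hc⟩ := (davenport_line_invariant_iff f h1).mp h2
    exact ⟨⟨c, W, h1, hc⟩, rfl⟩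

theorem davenport_finrank_ker_dualMap [FiniteDimensional F V] (h : V →ₗ[F] V) :
    Module.finrank F (LinearMap.ker h.dualMap) = Module.finrank F (LinearMap.ker h) := by
  have h1 := LinearMap.finrank_range_add_finrank_ker h
  have h2 := LinearMap.finrank_range_add_finrank_ker h.dualMap
  have h3 := LinearMap.finrank_range_dualMap_eq_finrank_range h
  have h4 : Module.finrank F (Module.Dual F V) = Module.finrank F V :=
    Subspace.dual_finrank_eq
  omega

theorem davenport_finrank_eigenspace_dualMap [FiniteDimensional F V] (f : V ≃ₗ[F] V) (c : F) :
    Module.finrank F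
        (Module.End.eigenspace (f.dualMap : Module.Dual F V →ₗ[F] Module.Dual F V) c) =
      Module.finrank F (Module.End.eigenspace (f : V →ₗ[F] V) c) := by
  rw [Module.End.eigenspace_def, Module.End.eigenspace_def]
  have key : ((f.dualMap : Module.Dual F V →ₗ[F] Module.Dual F V) - c • 1)
      = ((f : V →ₗ[F] V) - c • 1).dualMap := by
    ext φ x
    simp [LinearMap.dualMap_apply, LinearEquiv.dualMap_apply, LinearMap.sub_apply,
      LinearMap.smul_apply, map_sub, map_smul, smul_eq_mul, mul_comm]
  rw [key]
  exact davenport_finrank_ker_dualMap _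

theorem davenport_finrank_dualAnnihilator [FiniteDimensional F V] (H : Submodule F V) :
    Module.finrank F H.dualAnnihilator + Module.finrank F H = Module.finrank F V := by
  have h1 : Module.finrank F (V ⧸ H) = Module.finrank F H.dualAnnihilator :=
    (Subspace.quotEquivAnnihilator H).finrank_eq
  have h2 := Submodule.finrank_quotient_add_finrank H
  omega

/-- Invariant hyperplanes correspond to invariant lines of the dual space, via annihilators. -/
noncomputable def davenportAnnEquiv [FiniteDimensional F V] (g : V ≃ₗ[F] V) (v : ℕ)
    (hdim : Module.finrank F V = v + 1) :
    {H : Submodule F V // Module.finrank F H = v ∧ H.map (g : V →ₗ[F] V) = H} ≃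
      {L : Submodule F (Module.Dual F V) // Module.finrank F L = 1 ∧
        L.map (g.dualMap : Module.Dual F V →ₗ[F] Module.Dual F V) = L} where
  toFun H := ⟨H.1.dualAnnihilator, by
      have := davenport_finrank_dualAnnihilator H.1
      rw [H.2.1, hdim] at this; omega,
    by
      apply davenport_map_eq_of_map_le g.dualMap
      rintro _ ⟨φ, hφ, rfl⟩
      simp only [SetLike.mem_coe] at hφ
      refine (Submodule.mem_dualAnnihilator _).mpr fun x hx => ?_
      replace hφ := (Submodule.mem_dualAnnihilator _).mp hφ
      have hgx : (g : V →ₗ[F] V) x ∈ H.1 := by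
        rw [← H.2.2]; exact Submodule.mem_map_of_mem hx
      show g.dualMap φ x = 0
      rw [LinearEquiv.dualMap_apply]
      exact hφ _ hgx⟩
  invFun L := ⟨L.1.dualCoannihilator, by
      have := Subspace.finrank_add_finrank_dualCoannihilator_eq L.1
      rw [L.2.1, hdim] at this; omega,
    by
      apply davenport_map_eq_of_map_le g
      rintro _ ⟨x, hx, rfl⟩
      simp only [SetLike.mem_coe] at hx
      refine (Submodule.mem_dualCoannihilator _).mpr fun φ hφ => ?_
      replace hx := (Submodule.mem_dualCoannihilator _).mp hx
      have hφ' : (g.dualMap : Module.Dual F V →ₗ[F] Module.Dual F V) φ ∈ L.1 := by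
        rw [← L.2.2]; exact Submodule.mem_map_of_mem hφ
      exact hx _ hφ'⟩
  left_inv H := Subtype.ext Subspace.dualAnnihilator_dualCoannihilator_eq
  right_inv L := Subtype.ext Subspace.dualCoannihilator_dualAnnihilator_eq

end DavenportAux

/-- **§5.3: points vs. hyperplanes.**  For a linear automorphism `g` of a
`(v+1)`-dimensional vector space `V` over a finite field `F` (`v ≥ 1`), the number of
`g`-invariant one-dimensional subspaces equals the number of `g`-invariant
`v`-dimensional (codimension-one) subspaces. -/
theorem davenport_pointsHyperplanes
    {F V : Type*} [Field F] [Fintype F] [AddCommGroup V] [Module F V]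
    (v : ℕ) (hv : 1 ≤ v) (hdim : Module.finrank F V = v + 1)
    (g : V ≃ₗ[F] V) :
    Nat.card {W : Submodule F V //
        Module.finrank F W = 1 ∧ W.map (g : V →ₗ[F] V) = W} =
      Nat.card {W : Submodule F V //
        Module.finrank F W = v ∧ W.map (g : V →ₗ[F] V) = W} := by
  have : FiniteDimensional F V := .of_finrank_pos (by omega)
  have hper : ∀ c : F, Nonempty
      ({W : Submodule F V // Module.finrank F W = 1 ∧
          W ≤ Module.End.eigenspace (g : V →ₗ[F] V) c} ≃
        {W : Submodule F (Module.Dual F V) // Module.finrank F W = 1 ∧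
          W ≤ Module.End.eigenspace
            (g.dualMap : Module.Dual F V →ₗ[F] Module.Dual F V) c}) :=
    fun c => davenport_lines_equiv_of_finrank_eq _ _
      (davenport_finrank_eigenspace_dualMap g c).symm
  refine Nat.card_congr ?_
  exact (davenportInvariantLinesEquivSigma g).trans
    ((Equiv.sigmaCongrRight fun c => Classical.choice (hper c)).trans
      ((davenportInvariantLinesEquivSigma g.dualMap).symm.trans
        (davenportAnnEquiv g v hdim).symm))
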